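/- A measurable set E ⊆ ℝ is a 2π-translation generator of a partition of ℝ (i.e., the sets E + 2nπ, n ∈ ℤ, are disjoint with union conull in ℝ) if and only if, modulo a null set, E is translation congruent modulo 2π to [0,2π). -/

import Mathlib

open MeasureTheory Set Real

/-- `E` and `F` are translation congruent modulo `2π`. -/
def TranslationCongruent (E F : Set ℝ) : Prop :=
  ∃ φ : ℝ → ℝ, Measurable φ ∧ Set.BijOn φ E F ∧ ∀ s ∈ E, ∃ k : ℤ, φ s = s + 2 * π * k

noncomputable def fr (s : ℝ) : ℝ := 2 * π * Int.fract (s / (2 * π))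

lemma fr_measurable : Measurable fr := by
  have : Measurable fun s : ℝ => Int.fract (s / (2 * π)) :=
    measurable_fract.comp (measurable_id.div_const _)
  exact this.const_mul _

lemma twopi_pos : (0:ℝ) < 2 * π := by positivity

lemma fr_mem (s : ℝ) : fr s ∈ Ico 0 (2 * π) := by
  have h := Int.fract_nonneg (s / (2 * π))
  have h2 := Int.fract_lt_one (s / (2 * π))
  unfold fr
  exact ⟨by positivity, by nlinarith [pi_pos]⟩

lemma fr_spec (s : ℝ) : fr s = s + 2 * π * (-⌊s / (2 * π)⌋ : ℤ) := by
  unfold fr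
  rw [Int.fract]
  have h : (2 * π) ≠ 0 := ne_of_gt twopi_pos
  push_cast
  field_simp
  ring

lemma fr_eq_self {y : ℝ} (hy : y ∈ Ico 0 (2 * π)) : fr y = y := by
  unfold fr
  have h1 : 0 ≤ y / (2 * π) := div_nonneg hy.1 twopi_pos.le
  have h2 : y / (2 * π) < 1 := (div_lt_one twopi_pos).2 hy.2
  rw [Int.fract_eq_self.2 ⟨h1, h2⟩]
  field_simp

lemma fr_add_int (s : ℝ) (n : ℤ) : fr (s + 2 * π * n) = fr s := by
  unfold fr
  have h : (s + 2 * π * n) / (2 * π) = s / (2 * π) + n := by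
    field_simp
  rw [h, Int.fract_add_intCast]

lemma ico_eq {a b : ℝ} (ha : a ∈ Ico 0 (2*π)) (hb : b ∈ Ico 0 (2*π)) (k : ℤ)
    (h : a = b + 2 * π * k) : a = b := by
  have hk : (k:ℝ) = 0 := by
    by_contra hne
    have : k ≠ 0 := fun h0 => hne (by exact_mod_cast h0)
    rcases lt_or_gt_of_ne this with h1 | h1
    · have h3 : (k:ℝ) ≤ -1 := by exact_mod_cast Int.le_sub_one_of_lt h1
      nlinarith [ha.1, ha.2, hb.1, hb.2, pi_pos]
    · have h3 : (1:ℝ) ≤ k := by exact_mod_cast h1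
      nlinarith [ha.1, ha.2, hb.1, hb.2, pi_pos]
  rw [h, hk]; ring

lemma img_eq_preimg (c : ℝ) (S : Set ℝ) :
    (fun s => s + c) '' S = (fun x => x + (-c)) ⁻¹' S := by
  ext x
  simp only [mem_image, mem_preimage]
  constructor
  · rintro ⟨a, ha, rfl⟩; simpa using ha
  · intro h; exact ⟨x + (-c), h, by ring⟩

lemma vol_img (c : ℝ) (S : Set ℝ) :
    volume ((fun s => s + c) '' S) = volume S := by
  rw [img_eq_preimg]
  exact measure_preimage_add_right volume (-c) S

lemma meas_img (c : ℝ) {S : Set ℝ} (hS : MeasurableSet S) :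
    MeasurableSet ((fun s => s + c) '' S) := by
  rw [img_eq_preimg]
  exact (measurable_id.add_const _) hS

theorem stmt_11 (E : Set ℝ) (hE : MeasurableSet E) :
    ((∀ m n : ℤ, m ≠ n →
        AEDisjoint volume ((fun s => s + 2 * π * m) '' E) ((fun s => s + 2 * π * n) '' E)) ∧
      volume (⋃ n : ℤ, (fun s => s + 2 * π * n) '' E)ᶜ = 0) ↔
    (∃ E' : Set ℝ, MeasurableSet E' ∧ volume (symmDiff E E') = 0 ∧
      TranslationCongruent E' (Set.Ico 0 (2 * π))) := by
  classical
  constructor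
  · rintro ⟨hd, hc⟩
    set N : Set ℝ := ⋃ p : ℤ × ℤ, ⋃ (_ : p.1 ≠ p.2),
      ((fun s => s + 2*π*p.1) '' E) ∩ ((fun s => s + 2*π*p.2) '' E) with hN_def
    set M : Set ℝ := (⋃ n : ℤ, (fun s => s + 2 * π * n) '' E)ᶜ with hM_def
    set Z : Set ℝ := ⋃ n : ℤ, (fun s => s + 2*π*(n:ℤ)) '' (N ∪ M) with hZ_def
    have hNm : MeasurableSet N :=
      MeasurableSet.iUnion fun p => MeasurableSet.iUnion fun _ =>
        (meas_img _ hE).inter (meas_img _ hE)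
    have hMm : MeasurableSet M :=
      (MeasurableSet.iUnion fun n => meas_img _ hE).compl
    have hZm : MeasurableSet Z :=
      MeasurableSet.iUnion fun n => meas_img _ (hNm.union hMm)
    have hNnull : volume N = 0 :=
      measure_iUnion_null fun p => measure_iUnion_null fun h => hd p.1 p.2 h
    have hZnull : volume Z = 0 :=
      measure_iUnion_null fun n => by
        rw [vol_img]; exact measure_union_null hNnull hc
    have hZinv : ∀ x : ℝ, ∀ k : ℤ, x ∈ Z → x + 2*π*k ∈ Z := by
      intro x k hx
      rw [hZ_def, mem_iUnion] at hx ⊢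
      obtain ⟨n, w, hw, hwx⟩ := hx
      exact ⟨n + k, w, hw, by push_cast; simp only [← hwx]; ring⟩
    have hZinv' : ∀ x : ℝ, ∀ k : ℤ, x + 2*π*k ∈ Z → x ∈ Z := by
      intro x k hx
      have := hZinv _ (-k) hx
      have he : x + 2*π*k + 2*π*(-k:ℤ) = x := by push_cast; ring
      rwa [he] at this
    have hMZ : M ⊆ Z := by
      intro x hx
      rw [hZ_def, mem_iUnion]
      exact ⟨0, x, Or.inr hx, by push_cast; ring⟩
    have hNZ : N ⊆ Z := by
      intro x hx
      rw [hZ_def, mem_iUnion]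
      exact ⟨0, x, Or.inl hx, by push_cast; ring⟩
    have hfr_notZ : ∀ s, s ∉ Z → fr s ∉ Z := by
      intro s hs hfs
      obtain ⟨k, hk⟩ : ∃ k : ℤ, fr s = s + 2*π*k := ⟨_, fr_spec s⟩
      have : s + 2*π*k ∈ Z := hk ▸ hfs
      exact hs (hZinv' s k this)
    have hinj : InjOn fr (E \ Z) := by
      intro s hs t ht hst
      by_contra hne
      have h1 := fr_spec s
      have h2 := fr_spec t
      set a : ℤ := -⌊s / (2*π)⌋
      set b : ℤ := -⌊t / (2*π)⌋
      have hsa : s = t + 2*π*((b:ℝ) - a) := by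
        linarith [hst ▸ h1, h2]
      have hba : b - a ≠ 0 := by
        intro h0
        apply hne
        have hba0 : ((b:ℝ) - a) = 0 := by
          have : (b:ℝ) = a := by exact_mod_cast sub_eq_zero.mp h0
          linarith
        rw [hsa, hba0]; ring
      have hsN : s ∈ N := by
        rw [hN_def, mem_iUnion]
        refine ⟨(0, b - a), ?_⟩
        rw [mem_iUnion]
        refine ⟨fun h => hba h.symm, ?_⟩
        constructor
        · exact ⟨s, hs.1, by push_cast; ring⟩
        · refine ⟨t, ht.1, ?_⟩
          show t + 2*π*((b - a : ℤ) : ℝ) = s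
          push_cast
          linarith [hsa]
      exact hs.2 (hNZ hsN)
    have hsurj : ∀ y ∈ Ico 0 (2*π), y ∉ Z → ∃ e ∈ E \ Z, fr e = y := by
      intro y hy hyZ
      have hyM : y ∉ M := fun h => hyZ (hMZ h)
      rw [hM_def] at hyM
      simp only [mem_compl_iff, not_not, mem_iUnion] at hyM
      obtain ⟨n, e, he, hey⟩ := hyM
      have heZ : e ∉ Z := fun h => hyZ (hey ▸ hZinv e n h)
      refine ⟨e, ⟨he, heZ⟩, ?_⟩
      have h1 : fr (e + 2*π*n) = fr e := fr_add_int e n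
      have h2 : e + 2*π*(n:ℝ) = y := hey
      rw [h2] at h1
      rw [← h1, fr_eq_self hy]
    set φ : ℝ → ℝ := fun x => if x ∈ Z then x else fr x with hφdef
    have hφ : ∀ x, φ x = if x ∈ Z then x else fr x := fun x => rfl
    refine ⟨(E \ Z) ∪ (Ico 0 (2*π) ∩ Z), (hE.diff hZm).union (measurableSet_Ico.inter hZm),
      ?_, φ, ?_, ?_, ?_⟩
    · -- symmDiff null
      have hsub : symmDiff E ((E \ Z) ∪ (Ico 0 (2*π) ∩ Z)) ⊆ Z := by
        intro x hx
        rw [Set.mem_symmDiff] at hx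
        rcases hx with ⟨hxE, hxE'⟩ | ⟨hxE', hxE⟩
        · by_contra hxZ
          exact hxE' (Or.inl ⟨hxE, hxZ⟩)
        · rcases hxE' with h | h
          · exact absurd h.1 hxE
          · exact h.2
      exact measure_mono_null hsub hZnull
    · exact Measurable.ite hZm measurable_id fr_measurable
    · constructor
      · rintro s (⟨hsE, hsZ⟩ | ⟨hsI, hsZ⟩)
        · rw [hφ s, if_neg hsZ]; exact fr_mem s
        · rw [hφ s, if_pos hsZ]; exact hsI
      constructor
      · rintro s hs t ht hst
        rw [hφ s, hφ t] at hst
        rcases hs with ⟨hsE, hsZ⟩ | ⟨hsI, hsZ⟩ <;>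
          rcases ht with ⟨htE, htZ⟩ | ⟨htI, htZ⟩
        · rw [if_neg hsZ, if_neg htZ] at hst
          exact hinj ⟨hsE, hsZ⟩ ⟨htE, htZ⟩ hst
        · rw [if_neg hsZ, if_pos htZ] at hst
          exact absurd (hst ▸ htZ) (hfr_notZ s hsZ)
        · rw [if_pos hsZ, if_neg htZ] at hst
          exact absurd (hst ▸ hsZ) (hfr_notZ t htZ)
        · rwa [if_pos hsZ, if_pos htZ] at hst
      · intro y hy
        by_cases hyZ : y ∈ Z
        · exact ⟨y, Or.inr ⟨hy, hyZ⟩, by rw [hφ y, if_pos hyZ]⟩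
        · obtain ⟨e, heEZ, hfe⟩ := hsurj y hy hyZ
          exact ⟨e, Or.inl heEZ, by rw [hφ e, if_neg heEZ.2]; exact hfe⟩
    · rintro s hs
      by_cases hsZ : s ∈ Z
      · exact ⟨0, by rw [hφ s, if_pos hsZ]; push_cast; ring⟩
      · exact ⟨_, by rw [hφ s, if_neg hsZ]; exact fr_spec s⟩
  · rintro ⟨E', hE', hnull, φ, hφm, hbij, hk⟩
    have hEE' : volume (E \ E') = 0 :=
      measure_mono_null (fun x hx => Set.mem_symmDiff.2 (Or.inl ⟨hx.1, hx.2⟩)) hnull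
    have hE'E : volume (E' \ E) = 0 :=
      measure_mono_null (fun x hx => Set.mem_symmDiff.2 (Or.inr ⟨hx.1, hx.2⟩)) hnull
    have hdisj : ∀ m n : ℤ, m ≠ n →
        ((fun s => s + 2*π*(m:ℤ)) '' E') ∩ ((fun s => s + 2*π*(n:ℤ)) '' E') = ∅ := by
      intro m n hmn
      ext x
      simp only [mem_inter_iff, mem_image, mem_empty_iff_false, iff_false]
      rintro ⟨⟨s, hs, hsx⟩, ⟨t, ht, htx⟩⟩
      obtain ⟨a, ha⟩ := hk s hs
      obtain ⟨b, hb⟩ := hk t ht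
      have hsx' : s + 2*π*(m:ℝ) = x := hsx
      have htx' : t + 2*π*(n:ℝ) = x := htx
      have hst : s = t + 2*π*((n:ℝ) - m) := by linarith
      have hφeq : φ s = φ t + 2*π*((n - m + a - b : ℤ) : ℝ) := by
        rw [ha, hb, hst]; push_cast; ring
      have heq : φ s = φ t :=
        ico_eq (hbij.1 hs) (hbij.1 ht) _ hφeq
      have hstt : s = t := hbij.2.1 hs ht heq
      apply hmn
      have hz : 2*π*((n:ℝ) - m) = 0 := by
        rw [hstt] at hst; linarith
      have h0 : ((n:ℝ) - m) = 0 := by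
        rcases mul_eq_zero.mp hz with h | h
        · exact absurd h (ne_of_gt twopi_pos)
        · exact h
      have : (m:ℝ) = n := by linarith
      exact_mod_cast this
    constructor
    · intro m n hmn
      have hsub : ((fun s => s + 2*π*(m:ℤ)) '' E) ∩ ((fun s => s + 2*π*(n:ℤ)) '' E) ⊆
          ((fun s => s + 2*π*(m:ℤ)) '' (E \ E')) ∪ ((fun s => s + 2*π*(n:ℤ)) '' (E \ E')) ∪
          (((fun s => s + 2*π*(m:ℤ)) '' E') ∩ ((fun s => s + 2*π*(n:ℤ)) '' E')) := by
        rintro x ⟨⟨s, hs, hsx⟩, ⟨t, ht, htx⟩⟩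
        by_cases hs' : s ∈ E'
        · by_cases ht' : t ∈ E'
          · exact Or.inr ⟨⟨s, hs', hsx⟩, ⟨t, ht', htx⟩⟩
          · exact Or.inl (Or.inr ⟨t, ⟨ht, ht'⟩, htx⟩)
        · exact Or.inl (Or.inl ⟨s, ⟨hs, hs'⟩, hsx⟩)
      apply measure_mono_null hsub
      rw [hdisj m n hmn]
      apply measure_union_null _ (measure_empty)
      apply measure_union_null <;> · rw [vol_img]; exact hEE'
    · have hsub : (⋃ n : ℤ, (fun s => s + 2 * π * n) '' E)ᶜ ⊆
          ⋃ n : ℤ, (fun s => s + 2*π*(n:ℤ)) '' (E' \ E) := by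
        intro x hx
        simp only [mem_compl_iff, mem_iUnion, mem_image, not_exists] at hx
        have hfx : fr x ∈ Ico 0 (2*π) := fr_mem x
        obtain ⟨s, hs, hsx⟩ := hbij.2.2 hfx
        obtain ⟨b, hb⟩ := hk s hs
        obtain ⟨a, ha⟩ : ∃ a : ℤ, fr x = x + 2*π*a := ⟨_, fr_spec x⟩
        rw [hsx] at hb
        have hxs : s + 2*π*((b - a : ℤ) : ℝ) = x := by
          push_cast
          linarith
        have hsE : s ∉ E := fun hsE => hx (b - a) s ⟨hsE, hxs⟩
        rw [mem_iUnion]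
        exact ⟨b - a, s, ⟨hs, hsE⟩, hxs⟩
      apply measure_mono_null hsub
      apply measure_iUnion_null
      intro n
      rw [vol_img]
      exact hE'E
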